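/- Let f be real-analytic near its simple root α and let γ be a real constant. Define the one-parameter iteration map F(x) = x - [3/2 - f'(y(x))/(2 f'(x)) + γ·(f'(y(x))/f'(x) - 1)²]·f(x)/f'(x), where y(x) = x - f(x)/f'(x), for x near α with f'(x) ≠ 0. Then for every γ ∈ ℝ this method is of third order, and as x → α, F(x) - α = (1/2)·[(4 - 8γ)·c₂² + c₃]·(x - α)³ + O((x - α)⁴). -/

import Mathlib

open Filter Asymptotics

private lemma pow_isBigO_pow (α : ℝ) {m n : ℕ} (h : m ≤ n) :
    (fun x : ℝ => (x - α) ^ n) =O[nhds α] fun x => (x - α) ^ m := by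
  have h1 : Filter.Tendsto (fun x : ℝ => (x - α) ^ (n - m)) (nhds α)
      (nhds ((α - α) ^ (n - m))) :=
    (((continuous_id.sub continuous_const).pow _).continuousAt (x := α)).tendsto
  have h2 := (isBigO_refl (fun x : ℝ => (x - α) ^ m) (nhds α)).mul (h1.isBigO_one ℝ)
  exact h2.congr (fun x => by rw [← pow_add, Nat.add_sub_cancel' h]) (fun x => mul_one _)

private lemma taylor_isBigO {f : ℝ → ℝ} {α : ℝ} (hf : AnalyticAt ℝ f α) (n : ℕ) :
    (fun x => f x - ∑ k ∈ Finset.range n,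
        (iteratedDeriv k f α / (Nat.factorial k : ℝ)) * (x - α) ^ k)
      =O[nhds α] fun x => (x - α) ^ n := by
  obtain ⟨p, hp⟩ := hf
  obtain ⟨r, hpb⟩ := hp
  have hcoeff : ∀ (k : ℕ) (z : ℝ),
      (p k fun _ => z) = (iteratedDeriv k f α / (Nat.factorial k : ℝ)) * z ^ k := by
    intro k z
    have h1 : (k.factorial : ℝ) * p.coeff k = iteratedDeriv k f α := by
      have h := hpb.factorial_smul (y := (1 : ℝ)) k
      rw [iteratedDeriv_eq_iteratedFDeriv]
      rw [← h, FormalMultilinearSeries.coeff]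
      simp [nsmul_eq_mul]
    have hk : (k.factorial : ℝ) ≠ 0 := Nat.cast_ne_zero.mpr k.factorial_ne_zero
    have h3 : p.coeff k = iteratedDeriv k f α / (Nat.factorial k : ℝ) := by
      field_simp [← h1]
      rw [mul_comm]; exact h1
    rw [p.apply_eq_pow_smul_coeff, h3, smul_eq_mul]
    ring
  have ht : Filter.Tendsto (fun x : ℝ => x - α) (nhds α) (nhds 0) := by
    have := ((continuous_id.sub (continuous_const (y := α))).continuousAt (x := α)).tendsto
    exact tendsto_sub_nhds_zero_iff.mpr tendsto_id
  have H := (hpb.hasFPowerSeriesAt.isBigO_sub_partialSum_pow n).comp_tendsto ht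
  have H2 : (fun x : ℝ => f x - p.partialSum n (x - α)) =O[nhds α]
      fun x : ℝ => (x - α) ^ n := by
    refine (H.congr_left fun x => by simp [Function.comp]).trans
      (isBigO_of_le _ fun x => ?_)
    simp [Function.comp, abs_pow]
  refine H2.congr_left fun x => ?_
  simp only [FormalMultilinearSeries.partialSum, hcoeff]

set_option maxHeartbeats 1600000 in
/-- The one-parameter family
`F(x) = x - [3/2 - f'(y)/(2f'(x)) + γ(f'(y)/f'(x) - 1)²]·f(x)/f'(x)`,
`y(x) = x - f(x)/f'(x)`, is of third order for every `γ ∈ ℝ`: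
`F(x) - α = (1/2)·[(4 - 8γ)c₂² + c₃]·(x - α)³ + O((x - α)⁴)` as `x → α`. -/
theorem third_order_one_parameter_family
    (f : ℝ → ℝ) (α γ : ℝ)
    (hf : AnalyticAt ℝ f α) (hroot : f α = 0) (hder : deriv f α ≠ 0) :
    let c₂ := iteratedDeriv 2 f α / ((Nat.factorial 2 : ℝ) * deriv f α)
    let c₃ := iteratedDeriv 3 f α / ((Nat.factorial 3 : ℝ) * deriv f α)
    let y : ℝ → ℝ := fun x => x - f x / deriv f x
    let F : ℝ → ℝ := fun x =>
      x - (3/2 - deriv f (y x) / (2 * deriv f x)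
            + γ * (deriv f (y x) / deriv f x - 1)^2) * (f x / deriv f x)
    (fun x => F x - α - (1/2) * ((4 - 8*γ) * c₂^2 + c₃) * (x - α)^3)
      =O[nhds α] (fun x => (x - α)^4) := by
  intro c₂ c₃ y F
  have hc₂ : c₂ = iteratedDeriv 2 f α / ((Nat.factorial 2 : ℝ) * deriv f α) := rfl
  have hc₃ : c₃ = iteratedDeriv 3 f α / ((Nat.factorial 3 : ℝ) * deriv f α) := rfl
  have hyx : ∀ x, y x = x - f x / deriv f x := fun _ => rfl
  have hFx : ∀ x, F x = x - (3/2 - deriv f (y x) / (2 * deriv f x)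
      + γ * (deriv f (y x) / deriv f x - 1)^2) * (f x / deriv f x) := fun _ => rfl
  clear_value c₂ c₃ y F
  have e0 : ((Nat.factorial 0 : ℕ) : ℝ) = 1 := by norm_num [Nat.factorial]
  have e1 : ((Nat.factorial 1 : ℕ) : ℝ) = 1 := by norm_num [Nat.factorial]
  have e2 : ((Nat.factorial 2 : ℕ) : ℝ) = 2 := by norm_num [Nat.factorial]
  have e3 : ((Nat.factorial 3 : ℕ) : ℝ) = 6 := by norm_num [Nat.factorial]
  set a1 : ℝ := deriv f α with ha1
  set a2 : ℝ := iteratedDeriv 2 f α / 2 with ha2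
  set a3 : ℝ := iteratedDeriv 3 f α / 6 with ha3
  clear_value a1 a2 a3
  have ha1ne : a1 ≠ 0 := hder
  have hI2 : iteratedDeriv 2 f α = 2 * a2 := by rw [ha2]; ring
  have hI3 : iteratedDeriv 3 f α = 6 * a3 := by rw [ha3]; ring
  have hc₂' : c₂ = a2 / a1 := by
    rw [hc₂, ha2, div_div]
    norm_num [Nat.factorial]
  have hc₃' : c₃ = a3 / a1 := by
    rw [hc₃, ha3, div_div]
    norm_num [Nat.factorial]
  set C : ℝ := 1/2 * ((4 - 8*γ) * c₂^2 + c₃) with hC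
  clear_value C
  have hCval : C = ((4 - 8*γ) * a2^2 + a3 * a1) / (2 * a1^2) := by
    rw [hC, hc₂', hc₃']; field_simp
  -- analyticity and continuity facts
  obtain ⟨s, hs, hfs⟩ := hf.exists_mem_nhds_analyticOnNhd
  have hg_an : AnalyticAt ℝ (deriv f) α := hfs.deriv α (mem_of_mem_nhds hs)
  have hg_cont : ContinuousAt (deriv f) α := hg_an.continuousAt
  have hf_cont : ContinuousAt f α := hf.continuousAt
  have hderα : deriv f α ≠ 0 := ha1 ▸ ha1ne
  have hgne : ∀ᶠ x in nhds α, deriv f x ≠ 0 := hg_cont.eventually_ne hderα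
  have hy_tend : Filter.Tendsto y (nhds α) (nhds α) := by
    have h1 : ContinuousAt y α := by
      rw [show y = fun x => x - f x / deriv f x from funext hyx]
      exact continuousAt_id.sub (hf_cont.div hg_cont hderα)
    have h2 := h1.tendsto
    rwa [show y α = α from by rw [hyx α, hroot]; simp] at h2
  -- Taylor expansions with big-O remainders
  have hφ : (fun x => f x - (a1*(x-α) + a2*(x-α)^2 + a3*(x-α)^3))
      =O[nhds α] fun x => (x-α)^4 := by
    refine (taylor_isBigO hf 4).congr_left fun x => ?_
    rw [Finset.sum_range_succ, Finset.sum_range_succ, Finset.sum_range_succ,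
      Finset.sum_range_one]
    simp only [iteratedDeriv_zero, iteratedDeriv_one, hroot, hI2, hI3, ← ha1,
      e0, e1, e2, e3]
    ring
  have hf2 : (fun x => f x - a1*(x-α)) =O[nhds α] fun x => (x-α)^2 := by
    refine (taylor_isBigO hf 2).congr_left fun x => ?_
    rw [Finset.sum_range_succ, Finset.sum_range_one]
    simp only [iteratedDeriv_zero, iteratedDeriv_one, hroot, ← ha1, e0, e1]
    ring
  have hgI1 : iteratedDeriv 1 (deriv f) α = 2 * a2 := by
    rw [← iteratedDeriv_succ']; exact hI2
  have hgI2 : iteratedDeriv 2 (deriv f) α = 6 * a3 := by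
    rw [← iteratedDeriv_succ']; exact hI3
  have hψ : (fun x => deriv f x - (a1 + 2*a2*(x-α) + 3*a3*(x-α)^2))
      =O[nhds α] fun x => (x-α)^3 := by
    refine (taylor_isBigO hg_an 3).congr_left fun x => ?_
    rw [Finset.sum_range_succ, Finset.sum_range_succ, Finset.sum_range_one]
    simp only [iteratedDeriv_zero, hgI1, hgI2, ← ha1, e0, e1, e2]
    ring
  have hg2 : (fun z => deriv f z - (a1 + 2*a2*(z-α))) =O[nhds α] fun z => (z-α)^2 := by
    refine (taylor_isBigO hg_an 2).congr_left fun x => ?_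
    rw [Finset.sum_range_succ, Finset.sum_range_one]
    simp only [iteratedDeriv_zero, hgI1, ← ha1, e0, e1]
    ring
  have hg1 : (fun x => deriv f x - a1) =O[nhds α] fun x => x - α := by
    have h := (taylor_isBigO hg_an 1).congr_left (f₂ := fun x => deriv f x - a1)
      fun x => by
        rw [Finset.sum_range_one]
        simp only [iteratedDeriv_zero, ← ha1, e0]
        ring
    exact h.congr_right fun x => pow_one _
  have hf1 : f =O[nhds α] fun x => x - α := by
    have h := hf.differentiableAt.hasFDerivAt.isBigO_sub
    simpa [hroot] using h
  have hgO1 : (fun x => deriv f x) =O[nhds α] (fun _ => (1:ℝ)) :=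
    hg_cont.tendsto.isBigO_one ℝ
  have hginv : (fun x => (deriv f x)⁻¹) =O[nhds α] (fun _ => (1:ℝ)) :=
    ((hg_cont.inv₀ hderα).tendsto).isBigO_one ℝ
  -- the auxiliary functions W and χ
  set W : ℝ → ℝ := fun x => y x - α with hWdef
  set χ : ℝ → ℝ := fun x => deriv f (y x) - a1 - 2*a2*W x with hχdef
  clear_value W χ
  have hWeq : ∀ᶠ x in nhds α, W x = ((x-α) * deriv f x - f x) * (deriv f x)⁻¹ :=
    hgne.mono fun x hx => by
      simp only [hWdef, hyx]
      field_simp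
      ring
  have hnum : (fun x => (x-α) * deriv f x - f x) =O[nhds α] fun x => (x-α)^2 := by
    have h1 : (fun x => (x-α)*(deriv f x - a1)) =O[nhds α] fun x => (x-α)^2 :=
      ((isBigO_refl (fun x : ℝ => x - α) (nhds α)).mul hg1).congr
        (fun x => rfl) (fun x => by ring)
    exact (h1.sub hf2).congr_left fun x => by ring
  have hW : W =O[nhds α] fun x => (x-α)^2 :=
    ((hnum.mul hginv).congr (fun x => rfl) fun x => mul_one _).congr'
      (hWeq.mono fun x hx => hx.symm) EventuallyEq.rfl
  have hWsq : (fun x => (y x - α)^2) =O[nhds α] fun x => (x-α)^4 :=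
    (hW.mul hW).congr (fun x => by simp only [hWdef]; ring) (fun x => by ring)
  have hχ4 : χ =O[nhds α] fun x => (x-α)^4 := by
    have hcomp := hg2.comp_tendsto hy_tend
    refine ((hcomp.congr (fun x => ?_) fun x => rfl).trans hWsq)
    simp only [Function.comp_apply, hχdef, hWdef]
    ring
  have hχ2 : χ =O[nhds α] fun x => (x-α)^2 :=
    hχ4.trans (pow_isBigO_pow α (by norm_num))
  have hχ1 : χ =O[nhds α] fun x => x - α :=
    hχ4.trans ((pow_isBigO_pow α (by norm_num : 1 ≤ 4)).congr_right fun x => pow_one _)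
  have hW1 : W =O[nhds α] fun x => x - α :=
    hW.trans ((pow_isBigO_pow α (by norm_num : 1 ≤ 2)).congr_right fun x => pow_one _)
  -- the polynomial approximants and correction terms
  set U : ℝ → ℝ := fun x => -3*(deriv f x)^2 + a1*(deriv f x)
      + 2*a2*((x-α)*(deriv f x) - f x - (a1*(x-α) + a2*(x-α)^2 + a3*(x-α)^3))
      - 2*γ*(a1 - deriv f x)^2 with hU
  set V : ℝ → ℝ := fun x =>
      2*((deriv f x)^2 + deriv f x * (a1 + 2*a2*(x-α) + 3*a3*(x-α)^2)
          + (a1 + 2*a2*(x-α) + 3*a3*(x-α)^2)^2)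
      + a1*(a1 + a2*(x-α) + a3*(x-α)^2)
      + 2*a2*(x-α)*(a1 + a2*(x-α) + a3*(x-α)^2)
      + 2*γ*(2*a1 - deriv f x - (a1 + 2*a2*(x-α) + 3*a3*(x-α)^2))*(a1 + a2*(x-α) + a3*(x-α)^2)
      - 2*C*(x-α)^2*((deriv f x)^2 + deriv f x * (a1 + 2*a2*(x-α) + 3*a3*(x-α)^2)
          + (a1 + 2*a2*(x-α) + 3*a3*(x-α)^2)^2)
      - 3*(deriv f x + (a1 + 2*a2*(x-α) + 3*a3*(x-α)^2))*(a1 + a2*(x-α) + a3*(x-α)^2)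
      with hV
  set BP : ℝ → ℝ := fun x =>
      2*(x-α)*(a1 + 2*a2*(x-α) + 3*a3*(x-α)^2)^3
      - 3*(a1 + 2*a2*(x-α) + 3*a3*(x-α)^2)^2*(a1*(x-α) + a2*(x-α)^2 + a3*(x-α)^3)
      + a1*(a1 + 2*a2*(x-α) + 3*a3*(x-α)^2)*(a1*(x-α) + a2*(x-α)^2 + a3*(x-α)^3)
      + 2*a2*((x-α)*(a1 + 2*a2*(x-α) + 3*a3*(x-α)^2)
          - (a1*(x-α) + a2*(x-α)^2 + a3*(x-α)^3))*(a1*(x-α) + a2*(x-α)^2 + a3*(x-α)^3)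
      - 2*γ*(a1 - (a1 + 2*a2*(x-α) + 3*a3*(x-α)^2))^2*(a1*(x-α) + a2*(x-α)^2 + a3*(x-α)^3)
      - 2*C*(x-α)^3*(a1 + 2*a2*(x-α) + 3*a3*(x-α)^2)^3 with hBP
  set Wf : ℝ → ℝ := fun x =>
      (-18*a2^3 + 40*γ*a2^3 + 9*a1*a2*a3 - 24*γ*a1*a2*a3)
      + ((-48*a2^4 + 96*γ*a2^4 - 18*a1*a2^2*a3 + 40*γ*a1*a2^2*a3 + 3*a1^2*a3^2
          - 18*γ*a1^2*a3^2)/a1)*(x-α)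
      + ((-32*a2^5 + 64*γ*a2^5 - 152*a1*a2^3*a3 + 288*γ*a1*a2^3*a3 + 13*a1^2*a2*a3^2
          - 42*γ*a1^2*a2*a3^2)/a1^2)*(x-α)^2
      + ((-144*a2^4*a3 + 288*γ*a2^4*a3 - 144*a1*a2^2*a3^2 + 216*γ*a1*a2^2*a3^2
          - 18*γ*a1^2*a3^3)/a1^2)*(x-α)^3
      + ((-216*a2^3*a3^2 + 432*γ*a2^3*a3^2 - 54*a1*a2*a3^3)/a1^2)*(x-α)^4
      + ((-108*a2^2*a3^3 + 216*γ*a2^2*a3^3 - 27*a1*a3^4)/a1^2)*(x-α)^5 with hWf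
  set Qm : ℝ → ℝ := fun x =>
      2*(x-α)*(deriv f x)^3 - 3*(deriv f x)^2*f x + a1*(deriv f x)*f x
      + 2*a2*((x-α)*deriv f x - f x)*f x - 2*γ*(a1 - deriv f x)^2*f x
      - 2*C*(x-α)^3*(deriv f x)^3 with hQm
  set R : ℝ → ℝ := fun x =>
      deriv f x * f x * χ x
      - 2*γ*(f x * (2*a2*W x + χ x) * (deriv f (y x) + a1 - 2*deriv f x)) with hR
  set N : ℝ → ℝ := fun x =>
      2*(x-α)*(deriv f x)^3 - 2*C*(x-α)^3*(deriv f x)^3 - 3*(deriv f x)^2*f x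
      + deriv f x * deriv f (y x) * f x - 2*γ*(deriv f (y x) - deriv f x)^2*f x with hN
  clear_value U V BP Wf Qm R N
  -- continuity of the coefficient functions
  have hU_cont : ContinuousAt U α := by rw [hU]; fun_prop
  have hV_cont : ContinuousAt V α := by rw [hV]; fun_prop
  have hWf_cont : ContinuousAt Wf α := by rw [hWf]; fun_prop
  have hUO : U =O[nhds α] (fun _ => (1:ℝ)) := hU_cont.tendsto.isBigO_one ℝ
  have hVO : V =O[nhds α] (fun _ => (1:ℝ)) := hV_cont.tendsto.isBigO_one ℝ
  -- key algebraic identities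
  have hQid : ∀ x, Qm x = BP x
      + (f x - (a1*(x-α) + a2*(x-α)^2 + a3*(x-α)^3)) * U x
      + (deriv f x - (a1 + 2*a2*(x-α) + 3*a3*(x-α)^2)) * ((x-α) * V x) := by
    intro x
    simp only [hQm, hBP, hU, hV]
    ring
  have hBPid : ∀ x, BP x = (x-α)^4 * Wf x := by
    intro x
    simp only [hBP, hWf, hCval]
    field_simp
    ring
  have hBPO : BP =O[nhds α] fun x => (x-α)^4 := by
    have h := (isBigO_refl (fun x : ℝ => (x-α)^4) (nhds α)).mul
      (hWf_cont.tendsto.isBigO_one ℝ)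
    exact h.congr (fun x => (hBPid x).symm) (fun x => mul_one _)
  have hφU : (fun x => (f x - (a1*(x-α) + a2*(x-α)^2 + a3*(x-α)^3)) * U x)
      =O[nhds α] fun x => (x-α)^4 :=
    (hφ.mul hUO).congr (fun _ => rfl) fun x => mul_one _
  have hψEV : (fun x => (deriv f x - (a1 + 2*a2*(x-α) + 3*a3*(x-α)^2)) * ((x-α) * V x))
      =O[nhds α] fun x => (x-α)^4 :=
    (hψ.mul ((isBigO_refl (fun x : ℝ => x - α) (nhds α)).mul hVO)).congr
      (fun _ => rfl) (fun x => by ring)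
  have hQmO : Qm =O[nhds α] fun x => (x-α)^4 :=
    ((hBPO.add hφU).add hψEV).congr_left fun x => (hQid x).symm
  -- the remainder R is O((x-α)^4)
  have ht1 : (fun x => deriv f x * f x * χ x) =O[nhds α] fun x => (x-α)^4 :=
    (((hgO1.mul hf1).mul hχ4).congr_right fun x => by ring).trans
      (pow_isBigO_pow α (by norm_num : 4 ≤ 5))
  have hs1 : (fun x => 2*a2*W x + χ x) =O[nhds α] fun x => (x-α)^2 :=
    (hW.const_mul_left (2*a2)).add hχ2
  have hs2 : (fun x => deriv f (y x) + a1 - 2*deriv f x) =O[nhds α] fun x => x - α := by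
    have h := (hχ1.add (hW1.const_mul_left (2*a2))).add (hg1.const_mul_left (-2))
    refine h.congr_left fun x => ?_
    simp only [hχdef, hWdef]
    ring
  have ht2 : (fun x => f x * (2*a2*W x + χ x) * (deriv f (y x) + a1 - 2*deriv f x))
      =O[nhds α] fun x => (x-α)^4 :=
    ((hf1.mul hs1).mul hs2).congr_right fun x => by ring
  have hRO : R =O[nhds α] fun x => (x-α)^4 :=
    (ht1.sub (ht2.const_mul_left (2*γ))).congr_left fun x => by simp only [hR]
  -- N agrees with Qm + R near α
  have hNQR : ∀ᶠ x in nhds α, N x = Qm x + R x :=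
    hgne.mono fun x hx => by
      simp only [hN, hQm, hR, hχdef, hWdef, hyx]
      field_simp
      ring
  have hNO : N =O[nhds α] fun x => (x-α)^4 :=
    (hQmO.add hRO).congr' (hNQR.mono fun x hx => hx.symm) EventuallyEq.rfl
  -- relate the iteration map to N
  have hNinv : (fun x => (2*(deriv f x)^3)⁻¹) =O[nhds α] (fun _ => (1:ℝ)) := by
    have hc : ContinuousAt (fun x => 2*(deriv f x)^3) α :=
      (hg_cont.pow 3).const_mul 2
    have hne : 2*(deriv f α)^3 ≠ 0 :=
      mul_ne_zero two_ne_zero (pow_ne_zero 3 hderα)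
    exact ((hc.inv₀ hne).tendsto).isBigO_one ℝ
  have hfinal : ∀ᶠ x in nhds α, F x - α - C*(x-α)^3 = N x * (2*(deriv f x)^3)⁻¹ :=
    hgne.mono fun x hx => by
      rw [hFx x]
      simp only [hN]
      field_simp
      ring
  have hmain : (fun x => N x * (2*(deriv f x)^3)⁻¹) =O[nhds α] fun x => (x-α)^4 :=
    (hNO.mul hNinv).congr (fun _ => rfl) fun x => mul_one _
  exact hmain.congr' (hfinal.mono fun x hx => hx.symm) EventuallyEq.rfl
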